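/- Let G be a group generated by elements t, b satisfying the relation t b^n t⁻¹ = b^{n-1} t⁻¹ b^{-n} t b^n for some integer n ≥ 1, and let D = [t,b]. Then b^n belongs to the subsemigroup ⟨D⟩ of G generated by all conjugates of D. -/

import Mathlib

theorem pow_mem_conj_semigroup {G : Type*} [Group G] (t b : G)
    (hgen : Subgroup.closure ({t, b} : Set G) = ⊤) (n : ℕ) (hn : 1 ≤ n)
    (h : t * b ^ n * t⁻¹ = b ^ (n - 1) * t⁻¹ * (b ^ n)⁻¹ * t * b ^ n) :
    b ^ n ∈ Subsemigroup.closure {x : G | ∃ g : G, x = g⁻¹ * (t⁻¹ * b⁻¹ * t * b) * g} := by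
  set X : Set G := {x : G | ∃ g : G, x = g⁻¹ * (t⁻¹ * b⁻¹ * t * b) * g} with hXdef
  set S := Subsemigroup.closure X with hSdef
  -- any conjugate of the commutator is in S
  have hXmem : ∀ g : G, g⁻¹ * (t⁻¹ * b⁻¹ * t * b) * g ∈ S :=
    fun g => Subsemigroup.subset_closure ⟨g, rfl⟩
  -- S is closed under conjugation
  have conjS : ∀ g : G, ∀ s ∈ S, g⁻¹ * s * g ∈ S := by
    intro g s hs
    induction hs using Subsemigroup.closure_induction with
    | mem x hx =>
      obtain ⟨g', hg'⟩ := hx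
      subst hg'
      have : g⁻¹ * (g'⁻¹ * (t⁻¹ * b⁻¹ * t * b) * g') * g
          = (g' * g)⁻¹ * (t⁻¹ * b⁻¹ * t * b) * (g' * g) := by group
      rw [this]; exact hXmem _
    | mul x y hx hy px py =>
      have : g⁻¹ * (x * y) * g = (g⁻¹ * x * g) * (g⁻¹ * y * g) := by group
      rw [this]; exact mul_mem px py
  -- gamma m = [t, b^m] ∈ S for m ≥ 1
  have gamma : ∀ m : ℕ, t⁻¹ * (b ^ (m + 1))⁻¹ * t * b ^ (m + 1) ∈ S := by
    intro m
    induction m with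
    | zero =>
      have : t⁻¹ * (b ^ 1)⁻¹ * t * b ^ 1 = (1 : G)⁻¹ * (t⁻¹ * b⁻¹ * t * b) * 1 := by
        rw [pow_one]; group
      rw [this]; exact hXmem 1
    | succ m ih =>
      have hid : t⁻¹ * (b ^ (m + 2))⁻¹ * t * b ^ (m + 2)
          = (t⁻¹ * (b ^ (m + 1))⁻¹ * t * b ^ (m + 1))
            * ((b ^ (m + 1))⁻¹ * (t⁻¹ * b⁻¹ * t * b) * b ^ (m + 1)) := by
        have h1 : b ^ (m + 2) = b ^ (m + 1) * b := pow_succ b (m + 1)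
        rw [h1]; group
      rw [hid]
      exact mul_mem ih (hXmem _)
  -- e := t b^n t⁻¹ b^{-n} ∈ S
  have he : t * b ^ n * t⁻¹ * (b ^ n)⁻¹ ∈ S := by
    have hγ : t⁻¹ * (b ^ n)⁻¹ * t * b ^ n ∈ S := by
      obtain ⟨m, rfl⟩ := Nat.exists_eq_add_of_le hn
      have := gamma m
      simpa [Nat.add_comm] using this
    have := conjS ((b ^ n)⁻¹ * t⁻¹) _ hγ
    have hid : ((b ^ n)⁻¹ * t⁻¹)⁻¹ * (t⁻¹ * (b ^ n)⁻¹ * t * b ^ n) * ((b ^ n)⁻¹ * t⁻¹)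
        = t * b ^ n * t⁻¹ * (b ^ n)⁻¹ := by group
    rwa [hid] at this
  -- the key relation: b * e = t⁻¹ * e * t
  have E1 : b * (t * b ^ n * t⁻¹ * (b ^ n)⁻¹)
      = t⁻¹ * (t * b ^ n * t⁻¹ * (b ^ n)⁻¹) * t := by
    have hb : b * b ^ (n - 1) = b ^ n := by
      rw [← pow_succ']
      congr 1
      omega
    calc b * (t * b ^ n * t⁻¹ * (b ^ n)⁻¹)
        = b * (b ^ (n - 1) * t⁻¹ * (b ^ n)⁻¹ * t * b ^ n * (b ^ n)⁻¹) := by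
          rw [← h]
      _ = (b * b ^ (n - 1)) * (t⁻¹ * (b ^ n)⁻¹ * t) := by group
      _ = b ^ n * (t⁻¹ * (b ^ n)⁻¹ * t) := by rw [hb]
      _ = t⁻¹ * (t * b ^ n * t⁻¹ * (b ^ n)⁻¹) * t := by group
  -- w_k ∈ S
  have W : ∀ k : ℕ, b * (t ^ (k + 1))⁻¹ * b⁻¹ * t ^ (k + 1) ∈ S := by
    intro k
    induction k with
    | zero =>
      have : b * (t ^ 1)⁻¹ * b⁻¹ * t ^ 1 = (b⁻¹)⁻¹ * (t⁻¹ * b⁻¹ * t * b) * b⁻¹ := by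
        rw [pow_one]; group
      rw [this]; exact hXmem _
    | succ k ih =>
      have hid : b * (t ^ (k + 2))⁻¹ * b⁻¹ * t ^ (k + 2)
          = (b * (t ^ (k + 1))⁻¹ * b⁻¹ * t ^ (k + 1))
            * ((b⁻¹ * t ^ (k + 1))⁻¹ * (t⁻¹ * b⁻¹ * t * b) * (b⁻¹ * t ^ (k + 1))) := by
        have h1 : t ^ (k + 2) = t ^ (k + 1) * t := pow_succ t (k + 1)
        rw [h1]; group
      rw [hid]
      exact mul_mem ih (hXmem _)
  -- key step identity
  have key : ∀ k : ℕ,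
      b * ((t ^ (k + 1))⁻¹ * (t * b ^ n * t⁻¹ * (b ^ n)⁻¹) * t ^ (k + 1))
      = (b * (t ^ (k + 1))⁻¹ * b⁻¹ * t ^ (k + 1))
        * ((t ^ (k + 2))⁻¹ * (t * b ^ n * t⁻¹ * (b ^ n)⁻¹) * t ^ (k + 2)) := by
    intro k
    have h2 : t ^ (k + 2) = t ^ (k + 1) * t := pow_succ t (k + 1)
    rw [h2]
    calc b * ((t ^ (k + 1))⁻¹ * (t * b ^ n * t⁻¹ * (b ^ n)⁻¹) * t ^ (k + 1))
        = b * (t ^ (k + 1))⁻¹ * b⁻¹ * (b * (t * b ^ n * t⁻¹ * (b ^ n)⁻¹)) * t ^ (k + 1) := by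
          group
      _ = b * (t ^ (k + 1))⁻¹ * b⁻¹ * (t⁻¹ * (t * b ^ n * t⁻¹ * (b ^ n)⁻¹) * t) * t ^ (k + 1) := by
          rw [E1]
      _ = (b * (t ^ (k + 1))⁻¹ * b⁻¹ * t ^ (k + 1))
          * ((t ^ (k + 1) * t)⁻¹ * (t * b ^ n * t⁻¹ * (b ^ n)⁻¹) * (t ^ (k + 1) * t)) := by
          group
  -- main induction: b^m * conj_{t^k}(e) ∈ S
  have main : ∀ m k : ℕ, b ^ m * ((t ^ k)⁻¹ * (t * b ^ n * t⁻¹ * (b ^ n)⁻¹) * t ^ k) ∈ S := by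
    intro m
    induction m with
    | zero =>
      intro k
      have := conjS (t ^ k) _ he
      simpa using this
    | succ m ih =>
      intro k
      match k with
      | 0 =>
        have hid : b ^ (m + 1) * ((t ^ 0)⁻¹ * (t * b ^ n * t⁻¹ * (b ^ n)⁻¹) * t ^ 0)
            = b ^ m * ((t ^ 1)⁻¹ * (t * b ^ n * t⁻¹ * (b ^ n)⁻¹) * t ^ 1) := by
          have h1 : b ^ (m + 1) = b ^ m * b := pow_succ b m
          rw [h1, pow_zero, pow_one, mul_assoc]
          rw [show b * (1⁻¹ * (t * b ^ n * t⁻¹ * (b ^ n)⁻¹) * 1)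
              = b * (t * b ^ n * t⁻¹ * (b ^ n)⁻¹) by group, E1]
        rw [hid]; exact ih 1
      | (k + 1) =>
        have h1 : b ^ (m + 1) = b ^ m * b := pow_succ b m
        have hid : b ^ (m + 1) * ((t ^ (k + 1))⁻¹ * (t * b ^ n * t⁻¹ * (b ^ n)⁻¹) * t ^ (k + 1))
            = (b ^ m * (b * (t ^ (k + 1))⁻¹ * b⁻¹ * t ^ (k + 1)) * (b ^ m)⁻¹)
              * (b ^ m * ((t ^ (k + 2))⁻¹ * (t * b ^ n * t⁻¹ * (b ^ n)⁻¹) * t ^ (k + 2))) := by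
          rw [h1, mul_assoc, key k]; group
        rw [hid]
        have hconj : b ^ m * (b * (t ^ (k + 1))⁻¹ * b⁻¹ * t ^ (k + 1)) * (b ^ m)⁻¹ ∈ S := by
          have := conjS (b ^ m)⁻¹ _ (W k)
          simpa using this
        exact mul_mem hconj (ih (k + 2))
  -- conclude
  have h1 : b ^ n * ((t ^ 0)⁻¹ * (t * b ^ n * t⁻¹ * (b ^ n)⁻¹) * t ^ 0) ∈ S := main n 0
  have h2 : t * b ^ n * t⁻¹ ∈ S := by
    have := conjS (b ^ n) _ h1
    have hid : (b ^ n)⁻¹ * (b ^ n * ((t ^ 0)⁻¹ * (t * b ^ n * t⁻¹ * (b ^ n)⁻¹) * t ^ 0)) * b ^ n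
        = t * b ^ n * t⁻¹ := by
      rw [pow_zero]; group
    rwa [hid] at this
  have := conjS t _ h2
  have hid : t⁻¹ * (t * b ^ n * t⁻¹) * t = b ^ n := by group
  rwa [hid] at this
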